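/- Let r(B) and d(B) denote the number of rises and descents of a word B over {1,2,3,4}. If B is a word beginning with 2 and ending with 2 (with length at least 2), then r(φ2(B)) = d(B) and d(φ2(B)) = r(B). -/

import Mathlib

/-- φ1: reverse the word and apply 1↦4, 2↦1, 3↦2, 4↦3. -/
def phi1 (A : List ℕ) : List ℕ := A.reverse.map (fun x => if x = 1 then 4 else x - 1)

/-- φ2: reverse the word and apply 1↦2, 2↦3, 3↦4, 4↦1. -/
def phi2 (A : List ℕ) : List ℕ := A.reverse.map (fun x => if x = 4 then 1 else x + 1)

/-- The Peano words: `peano 1 = 123`, `peano (n+1) = φ1(Xₙ) 1 Xₙ 2 Xₙ 3 φ2(Xₙ)`. -/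
def peano : ℕ → List ℕ
  | 0 => []
  | 1 => [1, 2, 3]
  | n + 2 =>
      phi1 (peano (n + 1)) ++ [1] ++ peano (n + 1) ++ [2] ++ peano (n + 1)
        ++ [3] ++ phi2 (peano (n + 1))

/-- Number of rises of a word. -/
def rises (w : List ℕ) : ℕ := ((w.zip w.tail).filter (fun p => p.1 < p.2)).length

/-- Number of descents of a word. -/
def descents (w : List ℕ) : ℕ := ((w.zip w.tail).filter (fun p => p.2 < p.1)).length

lemma pairs_snoc (u : List ℕ) (a : ℕ) :
    (u ++ [a]).zip (u ++ [a]).tail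
      = u.zip u.tail ++ (u.getLast?.map (fun b => (b, a))).toList := by
  induction u with
  | nil => simp
  | cons x u ih =>
    cases u with
    | nil => simp [List.zip]
    | cons y u' =>
      simpa [List.zip_cons_cons, List.getLast?_cons_cons] using ih

lemma pairs_reverse (w : List ℕ) :
    w.reverse.zip w.reverse.tail = ((w.zip w.tail).map Prod.swap).reverse := by
  induction w with
  | nil => simp
  | cons a l ih =>
    cases l with
    | nil => simp
    | cons b l' =>
      rw [List.reverse_cons, pairs_snoc, ih]
      simp [List.zip_cons_cons]

lemma crossing (B : List ℕ) :
    ((B.zip B.tail).countP (fun p => p.1 ≠ 4 ∧ p.2 = 4))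
      + (if B.head? = some 4 then 1 else 0)
    = ((B.zip B.tail).countP (fun p => p.1 = 4 ∧ p.2 ≠ 4))
      + (if B.getLast? = some 4 then 1 else 0) := by
  induction B with
  | nil => simp
  | cons a l ih =>
    cases l with
    | nil => simp
    | cons b l' =>
      rw [show ((a :: b :: l').zip (a :: b :: l').tail)
            = (a, b) :: ((b :: l').zip (b :: l').tail) by simp [List.zip_cons_cons]]
      rw [List.countP_cons, List.countP_cons, List.getLast?_cons_cons]
      have hh : (b :: l').head? = some b := rfl
      rw [hh] at ih
      rcases eq_or_ne a 4 with ha | ha <;> rcases eq_or_ne b 4 with hb | hb <;>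
        simp [ha, hb] at ih ⊢ <;> omega

lemma countP_sum {α : Type*} (p r s t : α → Bool) (l : List α)
    (h : ∀ a ∈ l, ((if p a then 1 else 0) + (if r a then 1 else 0) : ℕ)
        = (if s a then 1 else 0) + (if t a then 1 else 0)) :
    l.countP p + l.countP r = l.countP s + l.countP t := by
  induction l with
  | nil => simp
  | cons x l ih =>
    have h1 := h x (by simp)
    have h2 := ih (fun a ha => h a (by simp [ha]))
    simp only [List.countP_cons]
    omega

def gg (x : ℕ) : ℕ := if x = 4 then 1 else x + 1

lemma pairs_phi2 (B : List ℕ) :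
    (phi2 B).zip (phi2 B).tail
      = (((B.zip B.tail).map Prod.swap).reverse).map (Prod.map gg gg) := by
  show ((B.reverse.map gg).zip (B.reverse.map gg).tail) = _
  rw [← List.map_tail, List.zip_map, pairs_reverse]

theorem phi2_rises_descents_two (B : List ℕ) (hB : ∀ x ∈ B, x = 1 ∨ x = 2 ∨ x = 3 ∨ x = 4)
    (hlen : 2 ≤ B.length) (h2 : B.head? = some 2) (h2' : B.getLast? = some 2) :
    rises (phi2 B) = descents B ∧ descents (phi2 B) = rises B := by
  -- membership of pair components
  have hmem : ∀ p ∈ B.zip B.tail,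
      (p.1 = 1 ∨ p.1 = 2 ∨ p.1 = 3 ∨ p.1 = 4) ∧ (p.2 = 1 ∨ p.2 = 2 ∨ p.2 = 3 ∨ p.2 = 4) := by
    rintro ⟨x, y⟩ hp
    obtain ⟨hx, hy⟩ := List.of_mem_zip hp
    exact ⟨hB x hx, hB y (List.tail_subset B hy)⟩
  -- crossing counts are equal
  have hcross := crossing B
  rw [h2, h2'] at hcross
  simp only [Option.some.injEq, reduceIte, add_zero] at hcross
  -- rises of phi2 B as a count over pairs of B
  have hr : rises (phi2 B) = (B.zip B.tail).countP (fun p => gg p.2 < gg p.1) := by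
    rw [rises, pairs_phi2, ← List.countP_eq_length_filter, List.countP_map,
      List.countP_reverse, List.countP_map]
    rfl
  have hd : descents (phi2 B) = (B.zip B.tail).countP (fun p => gg p.1 < gg p.2) := by
    rw [descents, pairs_phi2, ← List.countP_eq_length_filter, List.countP_map,
      List.countP_reverse, List.countP_map]
    rfl
  have hrB : rises B = (B.zip B.tail).countP (fun p => p.1 < p.2) :=
    List.countP_eq_length_filter.symm
  have hdB : descents B = (B.zip B.tail).countP (fun p => p.2 < p.1) :=
    List.countP_eq_length_filter.symm
  constructor
  · have key := countP_sum (fun p : ℕ × ℕ => decide (gg p.2 < gg p.1))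
      (fun p => decide (p.1 = 4 ∧ p.2 ≠ 4))
      (fun p => decide (p.2 < p.1))
      (fun p => decide (p.1 ≠ 4 ∧ p.2 = 4))
      (B.zip B.tail) ?_
    · rw [hr, hdB]; omega
    · rintro ⟨x, y⟩ hp
      obtain ⟨hx, hy⟩ := hmem _ hp
      rcases hx with h | h | h | h <;> rcases hy with h' | h' | h' | h' <;>
        subst h <;> subst h' <;> decide
  · have key := countP_sum (fun p : ℕ × ℕ => decide (gg p.1 < gg p.2))
      (fun p => decide (p.1 ≠ 4 ∧ p.2 = 4))
      (fun p => decide (p.1 < p.2))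
      (fun p => decide (p.1 = 4 ∧ p.2 ≠ 4))
      (B.zip B.tail) ?_
    · rw [hd, hrB]; omega
    · rintro ⟨x, y⟩ hp
      obtain ⟨hx, hy⟩ := hmem _ hp
      rcases hx with h | h | h | h <;> rcases hy with h' | h' | h' | h' <;>
        subst h <;> subst h' <;> decide
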